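/- The superadditive cover satisfies the dynamic-programming recurrence: for every resource supply W : Fin N → ℕ with W ≠ 0 and W(i) ≤ R for all i, v*(W) = max over nonzero vectors r with r(i) ≤ W(i) for all i of ( v(r) + v*(W − r) ), where W − r denotes componentwise subtraction. -/

import Mathlib

/-- `Π(W)`: the set of finite multisets of nonzero resource vectors (entries `≤ R`)
whose componentwise sum is at most `W i` for every player `i`. -/
def PiW (N R : ℕ) (W : Fin N → ℕ) : Set (Multiset (Fin N → ℕ)) :=
  {π | (∀ r ∈ π, r ≠ 0 ∧ ∀ i, r i ≤ R) ∧ ∀ i : Fin N, (π.map (fun r => r i)).sum ≤ W i}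

/-- The superadditive cover `v*(W) = sup_{π ∈ Π(W)} Σ_{r ∈ π} v(r)`. -/
noncomputable def vstar (N R : ℕ) (v : (Fin N → ℕ) → ℝ) (W : Fin N → ℕ) : ℝ :=
  sSup ((fun π : Multiset (Fin N → ℕ) => (π.map v).sum) '' PiW N R W)


/-- exchange sums -/
lemma sum_map_sum (N : ℕ) (π : Multiset (Fin N → ℕ)) :
    (π.map (fun r => ∑ i, r i)).sum = ∑ i, (π.map (fun r => r i)).sum := by
  induction π using Multiset.induction with
  | empty => simp
  | cons a s ih => simp [ih, Finset.sum_add_distrib]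

/-- card bound: every π ∈ PiW has card ≤ ∑ W i -/
lemma piW_card_le (N R : ℕ) (W : Fin N → ℕ) {π : Multiset (Fin N → ℕ)}
    (hπ : π ∈ PiW N R W) : π.card ≤ ∑ i, W i := by
  obtain ⟨h1, h2⟩ := hπ
  calc π.card = (π.map (fun _ => 1)).sum := by simp
    _ ≤ (π.map (fun r => ∑ i, r i)).sum := by
        apply Multiset.sum_map_le_sum_map
        intro r hr
        have := (h1 r hr).1
        by_contra h
        push_neg at h
        interval_cases h' : (∑ i, r i)
        · exact (h1 r hr).1 (funext fun i => by
            have := Finset.sum_eq_zero_iff.mp h' i (Finset.mem_univ i); simpa using this)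
    _ = ∑ i, (π.map (fun r => r i)).sum := sum_map_sum N π
    _ ≤ ∑ i, W i := Finset.sum_le_sum fun i _ => h2 i

lemma piW_finite (N R : ℕ) (W : Fin N → ℕ) : (PiW N R W).Finite := by
  set M : Multiset (Fin N → ℕ) :=
    (∑ i, W i) • (Finset.Icc (0 : Fin N → ℕ) (fun _ => R)).val with hM
  apply (Set.finite_Iic M).subset
  intro π hπ
  rw [Set.mem_Iic, Multiset.le_iff_count]
  intro a
  by_cases ha : a ∈ π
  · have h1 : Multiset.count a π ≤ ∑ i, W i :=
      (Multiset.count_le_card a π).trans (piW_card_le N R W hπ)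
    have h2 : a ∈ (Finset.Icc (0 : Fin N → ℕ) (fun _ => R)).val := by
      rw [Finset.mem_val, Finset.mem_Icc]
      exact ⟨fun i => Nat.zero_le _, fun i => (hπ.1 a ha).2 i⟩
    calc Multiset.count a π ≤ ∑ i, W i := h1
      _ = (∑ i, W i) * 1 := by ring
      _ ≤ (∑ i, W i) * Multiset.count a (Finset.Icc (0 : Fin N → ℕ) (fun _ => R)).val := by
          exact Nat.mul_le_mul_left _ (Multiset.one_le_count_iff_mem.mpr h2)
      _ = Multiset.count a M := by rw [hM, Multiset.count_nsmul]
  · simp [Multiset.count_eq_zero_of_notMem ha]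

lemma zero_mem_piW (N R : ℕ) (W : Fin N → ℕ) : (0 : Multiset (Fin N → ℕ)) ∈ PiW N R W := by
  constructor
  · intro r hr; simp at hr
  · intro i; simp

lemma vstar_mem (N R : ℕ) (v : (Fin N → ℕ) → ℝ) (W : Fin N → ℕ) :
    ∃ π ∈ PiW N R W, vstar N R v W = (π.map v).sum := by
  have hfin : ((fun π : Multiset (Fin N → ℕ) => (π.map v).sum) '' PiW N R W).Finite :=
    (piW_finite N R W).image _
  have hne : ((fun π : Multiset (Fin N → ℕ) => (π.map v).sum) '' PiW N R W).Nonempty :=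
    ⟨0, ⟨0, zero_mem_piW N R W, by simp⟩⟩
  have := hne.csSup_mem hfin
  obtain ⟨π, hπ, hval⟩ := this
  exact ⟨π, hπ, hval.symm⟩

lemma le_vstar (N R : ℕ) (v : (Fin N → ℕ) → ℝ) (W : Fin N → ℕ)
    {π : Multiset (Fin N → ℕ)} (hπ : π ∈ PiW N R W) :
    (π.map v).sum ≤ vstar N R v W :=
  le_csSup ((piW_finite N R W).image _).bddAbove ⟨π, hπ, rfl⟩

lemma vstar_nonneg (N R : ℕ) (v : (Fin N → ℕ) → ℝ) (W : Fin N → ℕ) :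
    0 ≤ vstar N R v W := by
  have := le_vstar N R v W (zero_mem_piW N R W)
  simpa using this

lemma vstar_zero (N R : ℕ) (v : (Fin N → ℕ) → ℝ) : vstar N R v 0 = 0 := by
  obtain ⟨π, hπ, hval⟩ := vstar_mem N R v 0
  have : π = 0 := by
    rw [Multiset.eq_zero_iff_forall_notMem]
    intro r hr
    have h1 := (hπ.1 r hr).1
    apply h1
    funext i
    have h2 := hπ.2 i
    have : r i ≤ (π.map (fun r => r i)).sum :=
      Multiset.le_sum_of_mem (Multiset.mem_map_of_mem (fun r => r i) hr)
    simpa using le_antisymm (this.trans h2) (Nat.zero_le _)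
  simp [hval, this]

example : True := trivial

lemma vstar_ub (N R : ℕ) (v : (Fin N → ℕ) → ℝ) (W : Fin N → ℕ) (hWR : ∀ i, W i ≤ R)
    (r : Fin N → ℕ) (hr : r ≠ 0) (hrW : ∀ i, r i ≤ W i) :
    v r + vstar N R v (W - r) ≤ vstar N R v W := by
  obtain ⟨π', hπ', hval⟩ := vstar_mem N R v (W - r)
  rw [hval]
  have hmem : (r ::ₘ π') ∈ PiW N R W := by
    constructor
    · intro a ha
      rcases Multiset.mem_cons.mp ha with h | h
      · exact h ▸ ⟨hr, fun i => (hrW i).trans (hWR i)⟩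
      · exact hπ'.1 a h
    · intro i
      simp only [Multiset.map_cons, Multiset.sum_cons]
      have h2 : (Multiset.map (fun a => a i) π').sum ≤ W i - r i := hπ'.2 i
      have h3 := hrW i
      generalize (Multiset.map (fun a => a i) π').sum = S at h2 ⊢
      omega
  have := le_vstar N R v W hmem
  simpa using this

/-- The dynamic-programming recurrence for the superadditive cover:
for nonzero `W` with `W i ≤ R`, `v*(W)` is the maximum of `v(r) + v*(W - r)` over all
nonzero `r` with `r i ≤ W i` componentwise. -/
theorem vstar_recurrence (N R : ℕ) (v : (Fin N → ℕ) → ℝ)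
    (hv : ∀ r, 0 ≤ v r) (hv0 : v 0 = 0)
    (W : Fin N → ℕ) (hW : W ≠ 0) (hWR : ∀ i, W i ≤ R) :
    IsGreatest
      {y : ℝ | ∃ r : Fin N → ℕ, r ≠ 0 ∧ (∀ i, r i ≤ W i) ∧
        y = v r + vstar N R v (W - r)}
      (vstar N R v W) := by
  constructor
  · -- membership
    obtain ⟨π, hπ, hval⟩ := vstar_mem N R v W
    rcases Multiset.empty_or_exists_mem π with hπ0 | ⟨r, hr⟩
    · -- π = 0, so vstar W = 0; use r = W
      have hvW0 : vstar N R v W = 0 := by simp [hval, hπ0]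
      refine ⟨W, hW, fun i => le_refl _, ?_⟩
      have hWW : W - W = 0 := by funext i; simp
      have hvW : v W = 0 := by
        have hmem : ({W} : Multiset (Fin N → ℕ)) ∈ PiW N R W := by
          constructor
          · intro a ha
            rw [Multiset.mem_singleton] at ha
            exact ha ▸ ⟨hW, hWR⟩
          · intro i; simp
        have := le_vstar N R v W hmem
        simp only [Multiset.map_singleton, Multiset.sum_singleton, hvW0] at this
        exact le_antisymm this (hv W)
      rw [hvW0, hvW, hWW, vstar_zero]; ring
    · obtain ⟨π', rfl⟩ := Multiset.exists_cons_of_mem hr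
      have hrne : r ≠ 0 := (hπ.1 r (Multiset.mem_cons_self r π')).1
      have hrW : ∀ i, r i ≤ W i := by
        intro i
        have h2 := hπ.2 i
        simp only [Multiset.map_cons, Multiset.sum_cons] at h2
        generalize (Multiset.map (fun a => a i) π').sum = S at h2
        omega
      refine ⟨r, hrne, hrW, ?_⟩
      apply le_antisymm
      · -- vstar W ≤ v r + vstar (W - r)
        rw [hval]
        simp only [Multiset.map_cons, Multiset.sum_cons]
        gcongr
        apply le_vstar
        constructor
        · intro a ha; exact hπ.1 a (Multiset.mem_cons_of_mem ha)
        · intro i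
          have h2 := hπ.2 i
          simp only [Multiset.map_cons, Multiset.sum_cons] at h2
          show (Multiset.map (fun a => a i) π').sum ≤ W i - r i
          generalize (Multiset.map (fun a => a i) π').sum = S at h2 ⊢
          omega
      · exact vstar_ub N R v W hWR r hrne hrW
  · rintro y ⟨r, hr, hrW, rfl⟩
    exact vstar_ub N R v W hWR r hr hrW
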